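/- For a d-simplex Δ in ℝᵈ with vertices x₀, ..., x_d and barycenter c = (x₀+...+x_d)/(d+1), one has (d+1)²·‖c‖²·vol(Δ) + (‖x₀‖² + ... + ‖x_d‖²)·vol(Δ) = (d+1)(d+2)·∫_Δ ‖x‖² dx. -/

import Mathlib

open MeasureTheory Set Real


section OneD

lemma integrableOn_pow_exp (m : ℕ) :
    IntegrableOn (fun s : ℝ => s ^ m * Real.exp (-s)) (Ioi 0) := by
  have h : (0:ℝ) < m + 1 := by positivity
  refine (Real.GammaIntegral_convergent h).congr_fun (fun s hs => ?_) measurableSet_Ioi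
  rw [show ((m:ℝ) + 1 - 1) = (m:ℕ) by ring]; simp only [Real.rpow_natCast]
  ring

lemma integral_pow_exp (m : ℕ) :
    ∫ s in Ioi (0:ℝ), s ^ m * Real.exp (-s) = m.factorial := by
  have h : (0:ℝ) < m + 1 := by positivity
  have h1 := Real.Gamma_eq_integral h
  rw [show ((m:ℝ) + 1) = ((m:ℕ) + 1 : ℝ) by norm_num, Real.Gamma_nat_eq_factorial] at h1
  rw [h1]
  apply setIntegral_congr_fun measurableSet_Ioi
  intro s hs
  show s ^ m * Real.exp (-s) = Real.exp (-s) * s ^ ((m:ℕ) + 1 - 1 : ℝ)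
  rw [show ((m:ℕ) + 1 - 1 : ℝ) = ((m:ℕ) : ℝ) by ring, Real.rpow_natCast]
  ring

noncomputable def g (m : ℕ) : ℝ → ℝ :=
  Set.indicator (Ici 0) (fun s => s ^ m * Real.exp (-s))

lemma g_integrable (m : ℕ) : Integrable (g m) := by
  rw [g, integrable_indicator_iff measurableSet_Ici]
  have := integrableOn_pow_exp m
  rwa [← integrableOn_Ici_iff_integrableOn_Ioi] at this

lemma g_integral (m : ℕ) : ∫ s, g m s = m.factorial := by
  rw [g, integral_indicator measurableSet_Ici, MeasureTheory.integral_Ici_eq_integral_Ioi,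
    integral_pow_exp]

end OneD

variable {n : ℕ}

def orth (n : ℕ) : Set (Fin n → ℝ) := {t | ∀ i, 0 ≤ t i}

def Q (n : ℕ) (u : ℝ) : Set (Fin n → ℝ) := {t | (∀ i, 0 ≤ t i) ∧ ∑ i, t i < u}

def Spi (n : ℕ) : Set (Fin n → ℝ) := {t | (∀ i, 0 ≤ t i) ∧ ∑ i, t i ≤ 1}

def Wset (n : ℕ) : Set ((Fin n → ℝ) × ℝ) := {p | (∀ i, 0 ≤ p.1 i) ∧ ∑ i, p.1 i < p.2}

def Pmon (k : Fin n → ℕ) : (Fin n → ℝ) → ℝ := fun t => ∏ i, t i ^ k i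

noncomputable def Ffun (k : Fin n → ℕ) : (Fin n → ℝ) × ℝ → ℝ :=
  (Wset n).indicator (fun p => Pmon k p.1 * Real.exp (-p.2))

lemma Pmon_cont (k : Fin n → ℕ) : Continuous (Pmon k) :=
  continuous_finset_prod _ fun i _ => (continuous_apply i).pow _

lemma orth_meas : MeasurableSet (orth n) := by
  have : orth n = ⋂ i, {t : Fin n → ℝ | 0 ≤ t i} := by ext t; simp [orth]
  rw [this]
  exact MeasurableSet.iInter fun i => measurableSet_le measurable_const (measurable_pi_apply i)

lemma Qmeas (u : ℝ) : MeasurableSet (Q n u) := by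
  have : Q n u = (⋂ i, {t : Fin n → ℝ | 0 ≤ t i}) ∩ {t : Fin n → ℝ | ∑ i, t i < u} := by
    ext t; simp [Q]
  rw [this]
  exact MeasurableSet.inter
    (MeasurableSet.iInter fun i => measurableSet_le measurable_const (measurable_pi_apply i))
    (measurableSet_lt (Finset.univ.measurable_sum fun i _ => measurable_pi_apply i)
      measurable_const)

lemma Spi_meas : MeasurableSet (Spi n) := by
  have : Spi n = (⋂ i, {t : Fin n → ℝ | 0 ≤ t i}) ∩ {t : Fin n → ℝ | ∑ i, t i ≤ 1} := by
    ext t; simp [Spi]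
  rw [this]
  exact MeasurableSet.inter
    (MeasurableSet.iInter fun i => measurableSet_le measurable_const (measurable_pi_apply i))
    (measurableSet_le (Finset.univ.measurable_sum fun i _ => measurable_pi_apply i)
      measurable_const)

lemma Wset_meas : MeasurableSet (Wset n) := by
  have : Wset n = (⋂ i, {p : (Fin n → ℝ) × ℝ | 0 ≤ p.1 i})
      ∩ {p : (Fin n → ℝ) × ℝ | ∑ i, p.1 i < p.2} := by ext p; simp [Wset]
  rw [this]
  refine MeasurableSet.inter (MeasurableSet.iInter fun i => ?_) ?_
  · exact measurableSet_le measurable_const ((measurable_pi_apply i).comp' measurable_fst)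
  · exact measurableSet_lt
      (Finset.univ.measurable_sum fun i _ => (measurable_pi_apply i).comp' measurable_fst)
      measurable_snd

lemma indicator_orth_eq (k : Fin n → ℕ) (t : Fin n → ℝ) :
    (orth n).indicator (fun t => Pmon k t * Real.exp (-∑ i, t i)) t
      = ∏ i, g (k i) (t i) := by
  by_cases h : t ∈ orth n
  · rw [Set.indicator_of_mem h]
    have : ∀ i, g (k i) (t i) = t i ^ k i * Real.exp (-t i) := fun i =>
      Set.indicator_of_mem (h i) _
    simp_rw [this, Finset.prod_mul_distrib, ← Real.exp_sum, ← Finset.sum_neg_distrib]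
    rfl
  · rw [Set.indicator_of_notMem h]
    obtain ⟨i, hi⟩ : ∃ i, ¬ (0 ≤ t i) := by simpa [orth] using h
    rw [eq_comm, Finset.prod_eq_zero (Finset.mem_univ i)]
    exact Set.indicator_of_notMem hi _

lemma stepA (k : Fin n → ℕ) :
    ∫ t in orth n, Pmon k t * Real.exp (-∑ i, t i)
      = ∏ i, ((k i).factorial : ℝ) := by
  rw [← integral_indicator orth_meas]
  simp_rw [indicator_orth_eq k]
  rw [MeasureTheory.integral_fintype_prod_volume_eq_prod (f := fun i => g (k i))]
  exact Finset.prod_congr rfl fun i _ => g_integral (k i)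

lemma stepA_integrable (k : Fin n → ℕ) :
    IntegrableOn (fun t => Pmon k t * Real.exp (-∑ i, t i)) (orth n) := by
  rw [show IntegrableOn (fun t => Pmon k t * Real.exp (-∑ i, t i)) (orth n) volume ↔ _ from
    (integrable_indicator_iff orth_meas).symm]
  have : Integrable (fun t : Fin n → ℝ => ∏ i, g (k i) (t i)) :=
    Integrable.fintype_prod (fun i => g_integrable (k i))
  exact this.congr (Filter.Eventually.of_forall fun t => (indicator_orth_eq k t).symm)

lemma Q_empty {u : ℝ} (hu : u ≤ 0) : Q n u = ∅ := by
  ext t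
  simp only [Q, mem_setOf_eq, mem_empty_iff_false, iff_false, not_and]
  intro h hlt
  exact absurd hlt (not_lt.2 (hu.trans (Finset.sum_nonneg fun i _ => h i)))

lemma smul_mem_Q_iff {u : ℝ} (hu : 0 < u) (v : Fin n → ℝ) :
    u • v ∈ Q n u ↔ v ∈ Q n 1 := by
  simp only [Q, mem_setOf_eq, Pi.smul_apply, smul_eq_mul]
  rw [← Finset.mul_sum]
  constructor
  · rintro ⟨h1, h2⟩
    exact ⟨fun i => nonneg_of_mul_nonneg_right (h1 i) hu, (mul_lt_iff_lt_one_right hu).1 h2⟩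
  · rintro ⟨h1, h2⟩
    exact ⟨fun i => mul_nonneg hu.le (h1 i), by rw [mul_lt_iff_lt_one_right hu]; exact h2⟩

lemma P_smul (k : Fin n → ℕ) {u : ℝ} (v : Fin n → ℝ) :
    Pmon k (u • v) = u ^ (∑ i, k i) * Pmon k v := by
  simp_rw [Pmon, Pi.smul_apply, smul_eq_mul, mul_pow, Finset.prod_mul_distrib,
    Finset.prod_pow_eq_pow_sum]

lemma hscale (k : Fin n → ℕ) {u : ℝ} (hu : 0 < u) :
    ∫ t in Q n u, Pmon k t = u ^ (n + ∑ i, k i) * ∫ t in Q n 1, Pmon k t := by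
  have hfr : Module.finrank ℝ (Fin n → ℝ) = n := by simp
  have h1 := MeasureTheory.Measure.integral_comp_smul (volume : Measure (Fin n → ℝ))
    ((Q n u).indicator (Pmon k)) u
  rw [hfr] at h1
  have h2 : ∀ v : Fin n → ℝ, (Q n u).indicator (Pmon k) (u • v)
      = u ^ (∑ i, k i) * (Q n 1).indicator (Pmon k) v := by
    intro v
    by_cases hv : v ∈ Q n 1
    · rw [indicator_of_mem ((smul_mem_Q_iff hu v).2 hv), indicator_of_mem hv, P_smul]
    · rw [indicator_of_notMem (fun h => hv ((smul_mem_Q_iff hu v).1 h)),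
        indicator_of_notMem hv, mul_zero]
  simp_rw [h2] at h1
  rw [integral_const_mul, abs_of_pos (by positivity : (0:ℝ) < (u ^ n)⁻¹), smul_eq_mul] at h1
  rw [← integral_indicator (Qmeas u), ← integral_indicator (Qmeas 1)]
  have hun : (u:ℝ) ^ n ≠ 0 := by positivity
  field_simp at h1
  rw [pow_add]
  nlinarith [h1]

lemma Spi_convex : Convex ℝ (Spi n) := by
  have : Spi n = (⋂ i, {t : Fin n → ℝ | 0 ≤ t i}) ∩ {t : Fin n → ℝ | ∑ i, t i ≤ 1} := by
    ext t; simp [Spi]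
  rw [this]
  refine Convex.inter (convex_iInter fun i => ?_) ?_
  · exact convex_halfSpace_ge (IsLinearMap.mk (fun a b => rfl) (fun c a => rfl)) 0
  · exact convex_halfSpace_le
      ⟨fun a b => by simp [Finset.sum_add_distrib], fun c a => by simp [Finset.mul_sum]⟩ 1

lemma Spi_ae_eq_Q : Spi n =ᵐ[(volume : Measure (Fin n → ℝ))] Q n 1 := by
  rw [MeasureTheory.ae_eq_set]
  constructor
  · rcases Nat.eq_zero_or_pos n with hn | hn
    · subst hn
      have he : Spi 0 \ Q 0 1 = ∅ := by
        ext t; simp [Spi, Q]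
      rw [he]; exact measure_empty
    · have hsub : Spi n \ Q n 1 ⊆ frontier (Spi n) := by
        rintro t ⟨ht, htq⟩
        have hsum : ∑ i, t i = 1 := le_antisymm ht.2 (by
          by_contra h
          exact htq ⟨ht.1, lt_of_not_ge h⟩)
        refine ⟨subset_closure ht, fun hint => ?_⟩
        rw [mem_interior_iff_mem_nhds, Metric.mem_nhds_iff] at hint
        obtain ⟨ε, hε, hball⟩ := hint
        have hmem : t + (fun _ => ε/2) ∈ Metric.ball t ε := by
          rw [Metric.mem_ball, dist_pi_lt_iff hε]
          intro i
          simp only [Pi.add_apply]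
          rw [Real.dist_eq, show t i + ε/2 - t i = ε/2 by ring, abs_of_pos (by linarith)]
          linarith
        have h2 := (hball hmem).2
        simp only [Pi.add_apply] at h2
        rw [Finset.sum_add_distrib, hsum, Finset.sum_const] at h2
        have hn' : (0:ℝ) < n * (ε/2) := by
          apply mul_pos _ (by linarith)
          exact_mod_cast hn
        simp only [Finset.card_univ, Fintype.card_fin, nsmul_eq_mul] at h2
        linarith
      exact measure_mono_null hsub (Spi_convex.addHaar_frontier volume)
  · have he : Q n 1 \ Spi n = ∅ := by
      rw [diff_eq_empty]
      rintro t ⟨h1, h2⟩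
      exact ⟨h1, h2.le⟩
    rw [he]; exact measure_empty

theorem moment (k : Fin n → ℕ) :
    ∫ t in Spi n, ∏ i, t i ^ k i
      = (∏ i, ((k i).factorial : ℝ)) / (n + ∑ i, k i).factorial := by
  have hFnonneg : ∀ p, 0 ≤ Ffun k p := by
    intro p
    apply indicator_nonneg
    rintro q ⟨hq, -⟩
    exact mul_nonneg (Finset.prod_nonneg fun i _ => pow_nonneg (hq i) _) (Real.exp_pos _).le
  have hFmeas : AEStronglyMeasurable (Ffun k)
      ((volume : Measure (Fin n → ℝ)).prod volume) :=
    ((((Pmon_cont k).comp continuous_fst).mul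
      (continuous_snd.neg.rexp)).stronglyMeasurable.indicator Wset_meas).aestronglyMeasurable
  have hsliceu : ∀ t : Fin n → ℝ, (fun u => Ffun k (t, u))
      = if (∀ i, 0 ≤ t i) then (Ioi (∑ i, t i)).indicator (fun u => Pmon k t * Real.exp (-u))
        else 0 := by
    intro t
    funext u
    by_cases h : ∀ i, 0 ≤ t i
    · rw [if_pos h]
      by_cases h2 : ∑ i, t i < u
      · rw [Ffun, indicator_of_mem (show (t, u) ∈ Wset n from ⟨h, h2⟩),
          indicator_of_mem (show u ∈ Ioi (∑ i, t i) from h2)]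
      · rw [Ffun, indicator_of_notMem (show (t, u) ∉ Wset n from fun hm => h2 hm.2),
          indicator_of_notMem (show u ∉ Ioi (∑ i, t i) from h2)]
    · rw [if_neg h, Ffun, indicator_of_notMem (show (t, u) ∉ Wset n from fun hm => h hm.1)]
      rfl
  have hIoiexp : ∀ a : ℝ, IntegrableOn (fun u => Real.exp (-u)) (Ioi a) := by
    intro a
    have := exp_neg_integrableOn_Ioi a (one_pos)
    simpa using this
  have hA : ∀ t : Fin n → ℝ, ∫ u, Ffun k (t, u)
      = (orth n).indicator (fun t => Pmon k t * Real.exp (-∑ i, t i)) t := by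
    intro t
    rw [hsliceu t]
    by_cases h : ∀ i, 0 ≤ t i
    · rw [if_pos h, indicator_of_mem (show t ∈ orth n from h),
        integral_indicator measurableSet_Ioi, integral_const_mul, integral_exp_neg_Ioi]
    · rw [if_neg h, indicator_of_notMem (show t ∉ orth n from h)]
      simp
  have hFint : Integrable (Ffun k) ((volume : Measure (Fin n → ℝ)).prod volume) := by
    rw [integrable_prod_iff hFmeas]
    constructor
    · refine Filter.Eventually.of_forall fun t => ?_
      rw [hsliceu t]
      by_cases h : ∀ i, 0 ≤ t i
      · rw [if_pos h, integrable_indicator_iff measurableSet_Ioi]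
        exact (hIoiexp _).const_mul _
      · rw [if_neg h]
        exact integrable_zero _ _ _
    · have heq : (fun t : Fin n → ℝ => ∫ u, ‖Ffun k (t, u)‖)
          = (orth n).indicator (fun t => Pmon k t * Real.exp (-∑ i, t i)) := by
        funext t
        rw [← hA t]
        congr 1
        funext u
        rw [Real.norm_eq_abs, abs_of_nonneg (hFnonneg _)]
      rw [heq, integrable_indicator_iff orth_meas]
      exact stepA_integrable k
  have hswap : ∫ t, ∫ u, Ffun k (t, u) = ∫ u, ∫ t, Ffun k (t, u) :=
    integral_integral_swap hFint
  have hLHS : ∫ t, ∫ u, Ffun k (t, u) = ∏ i, ((k i).factorial : ℝ) := by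
    rw [← stepA k, ← integral_indicator orth_meas]
    congr 1
    funext t
    exact hA t
  have hslicet : ∀ u : ℝ, ∫ t, Ffun k (t, u) = (∫ t in Q n u, Pmon k t) * Real.exp (-u) := by
    intro u
    have heq : (fun t => Ffun k (t, u)) = (Q n u).indicator (fun t => Pmon k t * Real.exp (-u)) := by
      funext t
      by_cases h : t ∈ Q n u
      · rw [indicator_of_mem h, Ffun, indicator_of_mem (show (t, u) ∈ Wset n from ⟨h.1, h.2⟩)]
      · rw [indicator_of_notMem h, Ffun,
          indicator_of_notMem (show (t, u) ∉ Wset n from fun hm => h ⟨hm.1, hm.2⟩)]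
    rw [heq, integral_indicator (Qmeas u), integral_mul_const]
  have hRHS : ∫ u, ∫ t, Ffun k (t, u)
      = (∫ t in Q n 1, Pmon k t) * (n + ∑ i, k i).factorial := by
    have h0 : ∀ u ∉ Ioi (0:ℝ), (∫ t, Ffun k (t, u)) = 0 := by
      intro u hu
      rw [hslicet u, Q_empty (by simpa using hu), Measure.restrict_empty,
        integral_zero_measure, zero_mul]
    rw [← setIntegral_eq_integral_of_forall_compl_eq_zero h0]
    have hcong : ∀ u ∈ Ioi (0:ℝ), (∫ t, Ffun k (t, u))
        = (∫ t in Q n 1, Pmon k t) * (u ^ (n + ∑ i, k i) * Real.exp (-u)) := by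
      intro u hu
      rw [hslicet u, hscale k hu]
      ring
    rw [setIntegral_congr_fun measurableSet_Ioi hcong, integral_const_mul, integral_pow_exp]
  have key : (∏ i, ((k i).factorial : ℝ))
      = (∫ t in Q n 1, Pmon k t) * (n + ∑ i, k i).factorial := by
    rw [← hLHS, hswap, hRHS]
  have hMS : ∫ t in Spi n, Pmon k t = ∫ t in Q n 1, Pmon k t := setIntegral_congr_set Spi_ae_eq_Q
  show ∫ t in Spi n, Pmon k t = _
  rw [hMS, key]
  field_simp

def SE (n : ℕ) : Set (EuclideanSpace ℝ (Fin n)) := {t | (∀ i, 0 ≤ t i) ∧ ∑ i, t i ≤ 1}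

def corners (n : ℕ) : Set (EuclideanSpace ℝ (Fin n)) :=
  insert 0 (Set.range fun i => EuclideanSpace.single i (1:ℝ))

lemma SE_convex : Convex ℝ (SE n) := by
  have : SE n = (⋂ i, {t : EuclideanSpace ℝ (Fin n) | 0 ≤ t i})
      ∩ {t : EuclideanSpace ℝ (Fin n) | ∑ i, t i ≤ 1} := by ext t; simp [SE]
  rw [this]
  refine Convex.inter (convex_iInter fun i => ?_) ?_
  · exact convex_halfSpace_ge (IsLinearMap.mk (fun a b => rfl) (fun c a => rfl)) 0
  · exact convex_halfSpace_le
      ⟨fun a b => by simp [Finset.sum_add_distrib],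
       fun c a => by simp [Finset.mul_sum]⟩ 1

lemma sum_single_eq (t : EuclideanSpace ℝ (Fin n)) :
    ∑ i, t i • EuclideanSpace.single i (1:ℝ) = t := by
  have h := (EuclideanSpace.basisFun (Fin n) ℝ).sum_repr t
  simpa [EuclideanSpace.basisFun_apply, EuclideanSpace.basisFun_repr] using h

lemma SE_eq_hull : SE n = convexHull ℝ (corners n) := by
  apply le_antisymm
  · intro t ht
    have hmem : ∀ j : Fin (n+1), (Fin.cons 0 (fun i => EuclideanSpace.single i (1:ℝ))
        : Fin (n+1) → EuclideanSpace ℝ (Fin n)) j ∈ corners n := by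
      intro j
      refine Fin.cases ?_ (fun i => ?_) j
      · simp [corners]
      · simp [corners]
    have hw : ∀ j ∈ Finset.univ, 0 ≤ (Fin.cons (1 - ∑ i, t i) (fun i => t i)
        : Fin (n+1) → ℝ) j := by
      intro j _
      refine Fin.cases ?_ (fun i => ?_) j
      · simp only [Fin.cons_zero]; linarith [ht.2]
      · simpa using ht.1 i
    have hws : ∑ j, (Fin.cons (1 - ∑ i, t i) (fun i => t i) : Fin (n+1) → ℝ) j = 1 := by
      rw [Fin.sum_cons]; ring
    have := Finset.centerMass_mem_convexHull Finset.univ hw (by rw [hws]; norm_num)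
      (fun j _ => hmem j)
    rw [Finset.centerMass, hws] at this
    have hv : ∑ j : Fin (n+1), (Fin.cons (1 - ∑ i, t i) (fun i => t i) : Fin (n+1) → ℝ) j
        • (Fin.cons 0 (fun i => EuclideanSpace.single i (1:ℝ))
          : Fin (n+1) → EuclideanSpace ℝ (Fin n)) j = t := by
      rw [Fin.sum_univ_succ]
      simp only [Fin.cons_zero, Fin.cons_succ, smul_zero, zero_add]
      exact sum_single_eq t
    simpa [hv] using this
  · apply convexHull_min _ SE_convex
    rintro p (rfl | ⟨i, rfl⟩)
    · refine ⟨fun i => le_refl _, by simp⟩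
    · constructor
      · intro j
        show (0:ℝ) ≤ EuclideanSpace.single i (1:ℝ) j
        rw [EuclideanSpace.single_apply]
        positivity
      · simp [EuclideanSpace.single_apply]

lemma SE_compact : IsCompact (SE n) := by
  rw [SE_eq_hull]
  exact ((Set.finite_range _).insert 0).isCompact_convexHull (𝕜 := ℝ)

lemma SE_meas : MeasurableSet (SE n) := SE_compact.isClosed.measurableSet

theorem momentE (n : ℕ) (k : Fin n → ℕ) :
    ∫ t in SE n, ∏ i, t i ^ k i
      = (∏ i, ((k i).factorial : ℝ)) / (n + ∑ i, k i).factorial := by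
  rw [← moment k]
  have h := (EuclideanSpace.volume_preserving_symm_measurableEquiv_toLp (Fin n)).setIntegral_preimage_emb
    (MeasurableEquiv.measurableEmbedding _) (fun t : Fin n → ℝ => ∏ i, t i ^ k i) (Spi n)
  rw [← h]
  rfl

lemma prod_single_pow (t : EuclideanSpace ℝ (Fin n)) (i : Fin n) :
    ∏ l, t l ^ (Pi.single i 1 : Fin n → ℕ) l = t i := by
  rw [Finset.prod_eq_single i]
  · rw [Pi.single_eq_same, pow_one]
  · intro l _ hl
    rw [Pi.single_eq_of_ne hl, pow_zero]
  · simp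

lemma mE0 : ∫ t in SE n, (1:ℝ) = (n.factorial : ℝ)⁻¹ := by
  have h := momentE n 0
  simpa using h

lemma mE1 (i : Fin n) : ∫ t in SE n, t i = ((n+1).factorial : ℝ)⁻¹ := by
  have h := momentE n (Pi.single i 1)
  simp_rw [prod_single_pow] at h
  rw [h]
  have h1 : ∑ l, (Pi.single i 1 : Fin n → ℕ) l = 1 := by
    simp [Finset.sum_pi_single']
  have h2 : ∏ l, (((Pi.single i 1 : Fin n → ℕ) l).factorial : ℝ) = 1 := by
    apply Finset.prod_eq_one
    intro l _
    rcases eq_or_ne l i with rfl | hl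
    · simp
    · simp [Pi.single_eq_of_ne hl]
  rw [h1, h2, one_div]

lemma mE2 (i j : Fin n) : ∫ t in SE n, t i * t j
    = (if i = j then (2:ℝ) else 1) / ((n+2).factorial : ℝ) := by
  rcases eq_or_ne i j with rfl | hij
  · have h := momentE n (Pi.single i 2)
    have hmon : ∀ t : EuclideanSpace ℝ (Fin n),
        ∏ l, t l ^ (Pi.single i 2 : Fin n → ℕ) l = t i * t i := by
      intro t
      rw [Finset.prod_eq_single i]
      · rw [Pi.single_eq_same]; ring
      · intro l _ hl
        rw [Pi.single_eq_of_ne hl, pow_zero]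
      · simp
    simp_rw [hmon] at h
    rw [h]
    have h1 : ∑ l, (Pi.single i 2 : Fin n → ℕ) l = 2 := by simp [Finset.sum_pi_single']
    have h2 : ∏ l, (((Pi.single i 2 : Fin n → ℕ) l).factorial : ℝ) = 2 := by
      rw [Finset.prod_eq_single i]
      · simp
      · intro l _ hl
        rw [Pi.single_eq_of_ne hl]; simp
      · simp
    rw [h1, h2, if_pos rfl]
  · have h := momentE n (Pi.single i 1 + Pi.single j 1)
    have hmon : ∀ t : EuclideanSpace ℝ (Fin n),
        ∏ l, t l ^ ((Pi.single i 1 + Pi.single j 1) : Fin n → ℕ) l = t i * t j := by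
      intro t
      simp_rw [Pi.add_apply, pow_add, Finset.prod_mul_distrib, prod_single_pow]
    simp_rw [hmon] at h
    rw [h]
    have h1 : ∑ l, ((Pi.single i 1 + Pi.single j 1) : Fin n → ℕ) l = 2 := by
      simp_rw [Pi.add_apply, Finset.sum_add_distrib, Finset.sum_pi_single']
      simp
    have h2 : ∏ l, ((((Pi.single i 1 + Pi.single j 1) : Fin n → ℕ) l).factorial : ℝ) = 1 := by
      apply Finset.prod_eq_one
      intro l _
      rw [Pi.add_apply]
      rw [Nat.cast_eq_one, Nat.factorial_eq_one]
      rcases eq_or_ne l i with rfl | hl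
      · rw [Pi.single_eq_same, Pi.single_eq_of_ne (by exact fun h => hij (h ▸ rfl))]
        norm_num
      · rw [Pi.single_eq_of_ne hl]
        rcases eq_or_ne l j with rfl | hl2
        · rw [Pi.single_eq_same]
        · rw [Pi.single_eq_of_ne hl2]
          norm_num

    rw [h1, h2, if_neg hij]

/-- For a `d`-simplex Δ in ℝᵈ with vertices `x 0, …, x d` and barycenter
`c = (x₀ + ⋯ + x_d)/(d+1)`:
`(d+1)²·‖c‖²·vol(Δ) + (Σᵢ ‖xᵢ‖²)·vol(Δ) = (d+1)(d+2)·∫_Δ ‖p‖² dp`. -/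
theorem parabolic_identity {d : ℕ} (x : Fin (d + 1) → EuclideanSpace ℝ (Fin d))
    (hx : AffineIndependent ℝ x) :
    let Δ := convexHull ℝ (Set.range x)
    let vol := (volume Δ).toReal
    let c := ((d : ℝ) + 1)⁻¹ • ∑ i, x i
    ((d : ℝ) + 1) ^ 2 * ‖c‖ ^ 2 * vol + (∑ i, ‖x i‖ ^ 2) * vol =
      ((d : ℝ) + 1) * ((d : ℝ) + 2) * ∫ p in Δ, ‖p‖ ^ 2 := by
  intro Δ vol c
  classical
  set y : Fin d → EuclideanSpace ℝ (Fin d) := fun i => x i.succ - x 0 with hy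
  -- linear independence of the edge vectors
  have hyli : LinearIndependent ℝ y := by
    have h := (affineIndependent_iff_linearIndependent_vsub ℝ x 0).1 hx
    have hinj : Function.Injective
        (fun i : Fin d => (⟨i.succ, Fin.succ_ne_zero i⟩ : {j : Fin (d+1) // j ≠ 0})) := by
      intro a b hab
      have := congrArg Subtype.val hab
      exact Fin.succ_injective _ this
    have h2 := h.comp _ hinj
    have he : ((fun j : {j : Fin (d+1) // j ≠ 0} => x ↑j -ᵥ x 0) ∘
        (fun i : Fin d => (⟨i.succ, Fin.succ_ne_zero i⟩ : {j : Fin (d+1) // j ≠ 0}))) = y := by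
      funext i
      show x i.succ -ᵥ x 0 = y i
      rw [vsub_eq_sub]
    rwa [he] at h2
  -- the linear map
  set L : EuclideanSpace ℝ (Fin d) →ₗ[ℝ] EuclideanSpace ℝ (Fin d) :=
    { toFun := fun t => ∑ i, t i • y i
      map_add' := by
        intro s t
        simp only [PiLp.add_apply, add_smul, Finset.sum_add_distrib]
      map_smul' := by
        intro r t
        simp only [PiLp.smul_apply, smul_eq_mul, RingHom.id_apply, Finset.smul_sum, smul_smul] }
    with hLdef
  have hLapply : ∀ t, L t = ∑ i, t i • y i := fun t => rfl
  have hLinj : Function.Injective L := by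
    rw [← LinearMap.ker_eq_bot, LinearMap.ker_eq_bot']
    intro t ht
    have h2 := Fintype.linearIndependent_iff.1 hyli t ht
    ext i
    exact h2 i
  have hLsingle : ∀ i, L (EuclideanSpace.single i (1:ℝ)) = y i := by
    intro i
    rw [hLapply, Finset.sum_eq_single i]
    · rw [EuclideanSpace.single_apply, if_pos rfl, one_smul]
    · intro l _ hl
      rw [EuclideanSpace.single_apply, if_neg hl, zero_smul]
    · simp
  -- the affine map
  set Taff : EuclideanSpace ℝ (Fin d) →ᵃ[ℝ] EuclideanSpace ℝ (Fin d) :=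
    { toFun := fun t => x 0 + L t
      linear := L
      map_vadd' := by
        intro p v
        show x 0 + L (v + p) = L v + (x 0 + L p)
        rw [map_add]
        abel } with hTdef
  have hTapply : ∀ t, Taff t = x 0 + L t := fun t => rfl
  -- image of the simplex
  have himg : Taff '' (SE d) = Δ := by
    show _ = convexHull ℝ (Set.range x)
    rw [SE_eq_hull, AffineMap.image_convexHull]
    congr 1
    rw [corners, Set.image_insert_eq, ← Set.range_comp]
    have h0 : Taff 0 = x 0 := by rw [hTapply, map_zero, add_zero]
    have hsucc : (⇑Taff ∘ fun i => EuclideanSpace.single i (1:ℝ)) = fun i => x i.succ := by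
      funext i
      show Taff (EuclideanSpace.single i 1) = x i.succ
      rw [hTapply, hLsingle]
      show x 0 + (x i.succ - x 0) = x i.succ
      rw [add_sub_cancel]
    rw [h0, hsucc]
    ext p
    simp only [Set.mem_insert_iff, Set.mem_range]
    constructor
    · rintro (rfl | ⟨i, rfl⟩)
      · exact ⟨0, rfl⟩
      · exact ⟨i.succ, rfl⟩
    · rintro ⟨j, rfl⟩
      refine Fin.cases ?_ (fun i => ?_) j
      · exact Or.inl rfl
      · exact Or.inr ⟨i, rfl⟩
  -- change of variables
  set L' : EuclideanSpace ℝ (Fin d) →L[ℝ] EuclideanSpace ℝ (Fin d) :=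
    LinearMap.toContinuousLinearMap L with hL'def
  set D : ℝ := |L'.det| with hDdef
  have hCoV : ∀ gf : EuclideanSpace ℝ (Fin d) → ℝ,
      ∫ p in Δ, gf p = D * ∫ t in SE d, gf (x 0 + L t) := by
    intro gf
    rw [← himg]
    have hder : ∀ t ∈ SE d, HasFDerivWithinAt (⇑Taff) L' (SE d) t := by
      intro t _
      exact (L'.hasFDerivAt.const_add (x 0)).hasFDerivWithinAt
    have hinj : Set.InjOn (⇑Taff) (SE d) := by
      intro s _ t _ hst
      rw [hTapply, hTapply] at hst
      exact hLinj (add_left_cancel hst)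
    rw [integral_image_eq_integral_abs_det_fderiv_smul volume SE_meas hder hinj gf]
    simp_rw [smul_eq_mul]
    rw [← integral_const_mul]
    rfl
  -- volume
  have hvol : vol = D * (d.factorial : ℝ)⁻¹ := by
    have h1 : ∫ p in Δ, (1:ℝ) = vol := by
      rw [setIntegral_const, smul_eq_mul, mul_one]; rfl
    have h2 := hCoV (fun _ => (1:ℝ))
    rw [h1] at h2
    rw [h2, mE0]
  -- inner product abbreviations
  set A : ℝ := ‖x 0‖ ^ 2 with hAdef
  set a : Fin d → ℝ := fun i => inner ℝ (x 0) (y i) with hadef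
  set b : Fin d → Fin d → ℝ := fun i j => inner ℝ (y i) (y j) with hbdef
  set Sa : ℝ := ∑ i, a i with hSadef
  set Sb : ℝ := ∑ i, ∑ j, b i j with hSbdef
  set Tb : ℝ := ∑ i, b i i with hTbdef
  -- expansion of the integrand
  have hexp : ∀ t : EuclideanSpace ℝ (Fin d), ‖x 0 + L t‖ ^ 2
      = (A + 2 * ∑ i, a i * t i) + ∑ i, ∑ j, b i j * (t i * t j) := by
    intro t
    rw [norm_add_sq_real]
    have h1 : inner ℝ (x 0) (L t) = ∑ i, a i * t i := by
      rw [hLapply, inner_sum]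
      refine Finset.sum_congr rfl fun i _ => ?_
      rw [real_inner_smul_right]
      ring
    have h2 : ‖L t‖ ^ 2 = ∑ i, ∑ j, b i j * (t i * t j) := by
      rw [← real_inner_self_eq_norm_sq, hLapply, sum_inner]
      refine Finset.sum_congr rfl fun i _ => ?_
      rw [real_inner_smul_left, inner_sum, Finset.mul_sum]
      refine Finset.sum_congr rfl fun j _ => ?_
      rw [real_inner_smul_right]
      ring
    rw [h1, h2]
  -- continuity of coordinates
  have hcoord : ∀ i, Continuous fun t : EuclideanSpace ℝ (Fin d) => t i := by
    intro i
    exact (PiLp.proj (𝕜 := ℝ) (p := 2) (β := fun _ : Fin d => ℝ) i).continuous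
  have hIlin : IntegrableOn (fun t : EuclideanSpace ℝ (Fin d) =>
      A + 2 * ∑ i, a i * t i) (SE d) := by
    exact ContinuousOn.integrableOn_compact SE_compact (Continuous.continuousOn
      (continuous_const.add (continuous_const.mul
      (continuous_finset_sum _ fun i _ => continuous_const.mul (hcoord i)))))
  have hIquad : IntegrableOn (fun t : EuclideanSpace ℝ (Fin d) =>
      ∑ i, ∑ j, b i j * (t i * t j)) (SE d) := by
    exact ContinuousOn.integrableOn_compact SE_compact (Continuous.continuousOn
      (continuous_finset_sum _ fun i _ => continuous_finset_sum _ fun j _ =>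
      continuous_const.mul ((hcoord i).mul (hcoord j))))
  -- value of the integral over the reference simplex
  have hIval : ∫ t in SE d, ‖x 0 + L t‖ ^ 2
      = A * (d.factorial : ℝ)⁻¹ + 2 * Sa * ((d+1).factorial : ℝ)⁻¹
        + (Sb + Tb) * ((d+2).factorial : ℝ)⁻¹ := by
    have e1 : ∫ t in SE d, ‖x 0 + L t‖ ^ 2
        = (∫ t in SE d, (A + 2 * ∑ i, a i * t i))
          + ∫ t in SE d, ∑ i, ∑ j, b i j * (t i * t j) := by
      rw [← integral_add hIlin hIquad]
      refine setIntegral_congr_fun SE_meas fun t _ => hexp t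
    have e2 : ∫ t in SE d, (A + 2 * ∑ i, a i * t i)
        = A * (d.factorial : ℝ)⁻¹ + 2 * Sa * ((d+1).factorial : ℝ)⁻¹ := by
      have hIc : IntegrableOn (fun _ : EuclideanSpace ℝ (Fin d) => A) (SE d) :=
        ContinuousOn.integrableOn_compact SE_compact continuous_const.continuousOn
      have hIs : IntegrableOn (fun t : EuclideanSpace ℝ (Fin d) =>
          2 * ∑ i, a i * t i) (SE d) :=
        ContinuousOn.integrableOn_compact SE_compact (Continuous.continuousOn
          (continuous_const.mul
          (continuous_finset_sum _ fun i _ => continuous_const.mul (hcoord i))))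
      rw [integral_add hIc hIs, integral_const_mul, integral_finset_sum _ (fun i _ =>
        (ContinuousOn.integrableOn_compact SE_compact
          (continuous_const.mul (hcoord i)).continuousOn :
            Integrable (fun t : EuclideanSpace ℝ (Fin d) => a i * t i) (volume.restrict (SE d))))]
      simp_rw [integral_const_mul, mE1]
      have hvolSE : (volume (SE d)).toReal = (d.factorial : ℝ)⁻¹ := by
        have h := mE0 (n := d)
        rwa [setIntegral_const, smul_eq_mul, mul_one] at h
      have hA' : ∫ _t in SE d, A = A * (d.factorial : ℝ)⁻¹ := by
        rw [setIntegral_const, measureReal_def, hvolSE, smul_eq_mul, mul_comm]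
      rw [hA', ← Finset.sum_mul, ← hSadef]
      ring
    have e3 : ∫ t in SE d, ∑ i, ∑ j, b i j * (t i * t j)
        = (Sb + Tb) * ((d+2).factorial : ℝ)⁻¹ := by
      rw [integral_finset_sum _ (fun i _ => (ContinuousOn.integrableOn_compact SE_compact
        (continuous_finset_sum _ fun j _ =>
          continuous_const.mul ((hcoord i).mul (hcoord j))).continuousOn :
            Integrable (fun t : EuclideanSpace ℝ (Fin d) => ∑ j, b i j * (t i * t j))
              (volume.restrict (SE d))))]
      have : ∀ i, ∫ t in SE d, ∑ j, b i j * (t i * t j)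
          = ∑ j, b i j * ((if i = j then (2:ℝ) else 1) / ((d+2).factorial : ℝ)) := by
        intro i
        rw [integral_finset_sum _ (fun j _ => (ContinuousOn.integrableOn_compact SE_compact
          (continuous_const.mul ((hcoord i).mul (hcoord j))).continuousOn :
            Integrable (fun t : EuclideanSpace ℝ (Fin d) => b i j * (t i * t j))
              (volume.restrict (SE d))))]
        refine Finset.sum_congr rfl fun j _ => ?_
        rw [integral_const_mul, mE2]
      simp_rw [this]
      have : ∀ i, ∑ j, b i j * ((if i = j then (2:ℝ) else 1) / ((d+2).factorial : ℝ))
          = (∑ j, b i j) * ((d+2).factorial : ℝ)⁻¹ + b i i * ((d+2).factorial : ℝ)⁻¹ := by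
        intro i
        have : ∀ j, b i j * ((if i = j then (2:ℝ) else 1) / ((d+2).factorial : ℝ))
            = b i j * ((d+2).factorial : ℝ)⁻¹
              + (if j = i then b i j * ((d+2).factorial : ℝ)⁻¹ else 0) := by
          intro j
          rcases eq_or_ne i j with rfl | hij
          · rw [if_pos rfl, if_pos rfl]
            ring
          · rw [if_neg hij, if_neg (Ne.symm hij)]
            ring
        rw [Finset.sum_congr rfl (fun j _ => this j), Finset.sum_add_distrib,
          Finset.sum_ite_eq' Finset.univ i (fun j => b i j * ((d+2).factorial : ℝ)⁻¹),
          if_pos (Finset.mem_univ i), Finset.sum_mul]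
      simp_rw [this, Finset.sum_add_distrib, ← Finset.sum_mul, ← hSbdef, ← hTbdef]
      ring
    rw [e1, e2, e3]
  -- value of the parabolic integral
  have hInt : ∫ p in Δ, ‖p‖ ^ 2
      = D * (A * (d.factorial : ℝ)⁻¹ + 2 * Sa * ((d+1).factorial : ℝ)⁻¹
        + (Sb + Tb) * ((d+2).factorial : ℝ)⁻¹) := by
    rw [hCoV (fun p => ‖p‖ ^ 2), hIval]
  -- expansion of the barycenter term
  have hd1 : ((d:ℝ) + 1) ≠ 0 := by positivity
  have hsumx : ∑ i, x i = ((d:ℝ) + 1) • x 0 + ∑ i, y i := by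
    rw [Fin.sum_univ_succ]
    have hxs : ∀ i : Fin d, x i.succ = x 0 + y i := by
      intro i
      show _ = x 0 + (x i.succ - x 0)
      rw [add_sub_cancel]
    simp_rw [hxs, Finset.sum_add_distrib, Finset.sum_const, Finset.card_univ, Fintype.card_fin]
    rw [add_smul, one_smul, ← Nat.cast_smul_eq_nsmul ℝ d (x 0)]
    abel
  have hinnerY : inner ℝ (x 0) (∑ i, y i) = Sa := by
    rw [inner_sum]
  have hYY : ‖∑ i, y i‖ ^ 2 = Sb := by
    rw [← real_inner_self_eq_norm_sq, sum_inner]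
    refine Finset.sum_congr rfl fun i _ => ?_
    rw [inner_sum]
  have hnormc : ((d:ℝ) + 1) ^ 2 * ‖c‖ ^ 2
      = ((d:ℝ)+1)^2 * A + 2 * ((d:ℝ)+1) * Sa + Sb := by
    have h1 : ‖c‖ ^ 2 = (((d:ℝ)+1)⁻¹)^2 * ‖∑ i, x i‖ ^ 2 := by
      show ‖((d:ℝ)+1)⁻¹ • ∑ i, x i‖ ^ 2 = _
      rw [norm_smul, mul_pow, Real.norm_eq_abs, sq_abs]
    have h2 : ‖∑ i, x i‖ ^ 2 = ((d:ℝ)+1)^2 * A + 2 * ((d:ℝ)+1) * Sa + Sb := by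
      rw [hsumx, norm_add_sq_real, norm_smul, Real.norm_eq_abs,
        abs_of_pos (by positivity : (0:ℝ) < (d:ℝ)+1), mul_pow,
        real_inner_smul_left, hinnerY, hYY]
      ring
    rw [h1, h2]
    field_simp
  -- expansion of the sum of squared norms
  have hsumsq : ∑ i, ‖x i‖ ^ 2 = ((d:ℝ)+1) * A + 2 * Sa + Tb := by
    rw [Fin.sum_univ_succ]
    have hxs : ∀ i : Fin d, ‖x i.succ‖ ^ 2 = A + 2 * a i + b i i := by
      intro i
      have : x i.succ = x 0 + y i := by
        show _ = x 0 + (x i.succ - x 0)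
        rw [add_sub_cancel]
      have hbii : ‖y i‖ ^ 2 = b i i := (real_inner_self_eq_norm_sq (y i)).symm
      rw [this, norm_add_sq_real, hbii]
    simp_rw [hxs, Finset.sum_add_distrib, Finset.sum_const, Finset.card_univ, Fintype.card_fin,
      nsmul_eq_mul, ← Finset.mul_sum, ← hSadef, ← hTbdef]
    ring
  -- factorial arithmetic
  have hf0 : (0:ℝ) < (d.factorial : ℝ) := by positivity
  have hf1 : ((d+1).factorial : ℝ) = ((d:ℝ)+1) * (d.factorial : ℝ) := by
    rw [Nat.factorial_succ]
    push_cast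
    ring
  have hf2 : ((d+2).factorial : ℝ) = ((d:ℝ)+2) * (((d:ℝ)+1) * (d.factorial : ℝ)) := by
    rw [show d+2 = (d+1)+1 from rfl, Nat.factorial_succ, Nat.factorial_succ]
    push_cast
    ring
  rw [hnormc, hsumsq, hvol, hInt, hf1, hf2]
  have hfne : (d.factorial : ℝ) ≠ 0 := hf0.ne'
  field_simp
  ring
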